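/- arXiv:0911.4444 — 2 statements merged into one kernel-verified Lean document; each statement's English description precedes it below -/
import Mathlib

section
/- Let μ, σ² > 0, b = 16σ²/(9μ), and a ≥ b. Then (μb/(μb+σ²))^(1/2) · ( (1 + σ²/(μ(2a−b)))^(1/2) − 1 ) ≥ 1/(5(1 + μa/σ²)). -/
theorem stmt_8 (μ σ2 : ℝ) (hμ : 0 < μ) (hσ : 0 < σ2) (b : ℝ) (hb : b = 16 * σ2 / (9 * μ))
    (a : ℝ) (ha : b ≤ a) :
    Real.sqrt (μ * b / (μ * b + σ2)) * (Real.sqrt (1 + σ2 / (μ * (2 * a - b))) - 1) ≥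
      1 / (5 * (1 + μ * a / σ2)) := by
  have hμb : μ * b = 16 * σ2 / 9 := by rw [hb]; field_simp
  have h1 : μ * b / (μ * b + σ2) = 16 / 25 := by
    rw [hμb]; field_simp; ring
  have h2 : Real.sqrt (16 / 25) = 4 / 5 := by
    rw [show (16 : ℝ) / 25 = (4 / 5) ^ 2 by norm_num, Real.sqrt_sq (by norm_num)]
  rw [h1, h2]
  have hbpos : 0 < b := by rw [hb]; positivity
  have hDpos : 0 < μ * (2 * a - b) := by nlinarith
  set x := σ2 / (μ * (2 * a - b)) with hxdef
  have hxpos : 0 < x := by positivity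
  set t := μ * a / σ2 with htdef
  have ht169 : 16 / 9 ≤ t := by
    rw [htdef]
    rw [le_div_iff₀ hσ]
    nlinarith [mul_le_mul_of_nonneg_left ha hμ.le]
  have hkey : x * (2 * t - 16 / 9) = 1 := by
    rw [hxdef, htdef]
    have h2ab : 2 * a - b ≠ 0 := by nlinarith
    field_simp
    nlinarith [hμb]
  set s := Real.sqrt (1 + x) with hsdef
  have hs : s ^ 2 = 1 + x := Real.sq_sqrt (by linarith)
  have hs1 : 1 ≤ s := by
    nlinarith [Real.sqrt_nonneg (1 + x), hs, hxpos]
  have hsle : 2 * s ≤ 2 + x := by nlinarith [hs, hs1]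
  have hstep : (s - 1) * (4 + x) ≥ 2 * x := by
    nlinarith [mul_nonneg (by linarith : (0:ℝ) ≤ s - 1) (by linarith : (0:ℝ) ≤ 2 + x - 2 * s), hs]
  have htpos : 0 < 1 + t := by linarith
  rw [ge_iff_le, div_le_iff₀ (by positivity)]
  have h4 : (s - 1) * (1 + t) * (4 + x) ≥ 2 * x * (1 + t) := by
    nlinarith [mul_le_mul_of_nonneg_right hstep htpos.le]
  nlinarith [h4, hkey, hxpos, mul_pos hxpos htpos, htpos]
end

section
/- Let (Sₖ)ₖ≥0 be an adapted real-valued process with S₀ = 0, and γ ≥ 0, such that the process Mₖ = Sₖ + γ·Σ_{j=1}^{k} (S_j − S_{j−1})² is a supermartingale. Then for every a > 0, P{ sup_k Sₖ ≥ a } ≤ 1/(1 + γa). -/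
open MeasureTheory Finset

lemma vfun_step (γ a x y : ℝ) (hγ : 0 < γ) (hx : x < a) :
    (if y < a then 1 / (1 + γ * (a - y)) else 1)
      ≤ (if x < a then 1 / (1 + γ * (a - x)) else 1)
        + γ / (1 + γ * (a - x)) ^ 2 * ((y - x) + γ * (y - x) ^ 2) := by
  rw [if_pos hx]
  have hA : (1:ℝ) < 1 + γ * (a - x) := by nlinarith
  have hA0 : (0:ℝ) < 1 + γ * (a - x) := by linarith
  split_ifs with hy
  · have hB0 : (0:ℝ) < 1 + γ * (a - y) := by nlinarith
    have key : 1 / (1 + γ * (a - x)) + γ / (1 + γ * (a - x)) ^ 2 * ((y - x) + γ * (y - x) ^ 2)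
        - 1 / (1 + γ * (a - y))
        = γ ^ 3 * (y - x) ^ 2 * (a - y) / ((1 + γ * (a - x)) ^ 2 * (1 + γ * (a - y))) := by
      field_simp
      ring
    have hnum : 0 ≤ γ ^ 3 * (y - x) ^ 2 * (a - y) := mul_nonneg (by positivity) (by linarith)
    have hden : 0 < (1 + γ * (a - x)) ^ 2 * (1 + γ * (a - y)) := by positivity
    nlinarith [div_nonneg hnum hden.le]
  · push_neg at hy
    have h1 : (1 + γ * (a - x)) - 1 ≤ γ * (y - x) := by nlinarith
    have h1' : (0:ℝ) ≤ γ * (y - x) := by nlinarith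
    have key : 1 / (1 + γ * (a - x)) + γ / (1 + γ * (a - x)) ^ 2 * ((y - x) + γ * (y - x) ^ 2) - 1
        = ((1 + γ * (a - x)) + γ * (y - x) + γ ^ 2 * (y - x) ^ 2 - (1 + γ * (a - x)) ^ 2)
          / (1 + γ * (a - x)) ^ 2 := by
      field_simp
      ring
    have hnum : 0 ≤ (1 + γ * (a - x)) + γ * (y - x) + γ ^ 2 * (y - x) ^ 2 - (1 + γ * (a - x)) ^ 2 := by
      nlinarith [sq_nonneg (γ * (y - x) - ((1 + γ * (a - x)) - 1))]
    have hden : (0:ℝ) < (1 + γ * (a - x)) ^ 2 := by positivity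
    nlinarith [div_nonneg hnum hden.le]

lemma root_facts (γ u : ℝ) (hγ : 0 < γ) :
    u ≤ ((-1) + Real.sqrt (1 + 4 * γ * (u + γ * u ^ 2))) / (2 * γ) ∧
    ((-1) + Real.sqrt (1 + 4 * γ * (u + γ * u ^ 2))) / (2 * γ)
      + γ * (((-1) + Real.sqrt (1 + 4 * γ * (u + γ * u ^ 2))) / (2 * γ)) ^ 2
      = u + γ * u ^ 2 := by
  have h : 1 + 4 * γ * (u + γ * u ^ 2) = (1 + 2 * γ * u) ^ 2 := by ring
  rw [h, Real.sqrt_sq_eq_abs]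
  have h2γ : (2 * γ) ≠ 0 := by positivity
  rcases abs_cases (1 + 2 * γ * u) with ⟨he, hc⟩ | ⟨he, hc⟩ <;> rw [he]
  · constructor
    · rw [le_div_iff₀ (by positivity)]; nlinarith
    · field_simp
      ring
  · constructor
    · rw [le_div_iff₀ (by positivity)]; nlinarith
    · field_simp
      ring

lemma horizon_bound {Ω : Type*} {m0 : MeasurableSpace Ω} (P : Measure Ω)
    [IsProbabilityMeasure P] (ℱ : Filtration ℕ m0) (T : ℕ → Ω → ℝ)
    (hT0 : ∀ ω, T 0 ω = 0) (hTadapt : ∀ k, Measurable[ℱ k] (T k))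
    (γ : ℝ) (hγ : 0 < γ)
    (hDint : ∀ k, Integrable (fun ω => (T (k+1) ω - T k ω) + γ * (T (k+1) ω - T k ω) ^ 2) P)
    (hDle : ∀ k, P[fun ω => (T (k+1) ω - T k ω) + γ * (T (k+1) ω - T k ω) ^ 2 | ℱ k] ≤ᵐ[P] 0)
    (a : ℝ) (ha : 0 < a) (n : ℕ) :
    P {ω | ∃ k ≤ n, a ≤ T k ω} ≤ ENNReal.ofReal (1 / (1 + γ * a)) := by
  classical
  set V : ℝ → ℝ := fun y => if y < a then 1 / (1 + γ * (a - y)) else 1 with hV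
  set D : ℕ → Ω → ℝ := fun k ω => (T (k+1) ω - T k ω) + γ * (T (k+1) ω - T k ω) ^ 2 with hD
  set Y : ℕ → Ω → ℝ := fun k ω => if ∃ j ≤ k, a ≤ T j ω then 1 else V (T k ω) with hY
  set g : ℕ → Ω → ℝ := fun k ω =>
    if ∃ j ≤ k, a ≤ T j ω then 0 else γ / (1 + γ * (a - T k ω)) ^ 2 with hg
  have hV0 : ∀ y, 0 ≤ V y := by
    intro y
    simp only [hV]
    split_ifs with h
    · have : (0:ℝ) < 1 + γ * (a - y) := by nlinarith
      positivity
    · norm_num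
  have hV1 : ∀ y, V y ≤ 1 := by
    intro y
    simp only [hV]
    split_ifs with h
    · have h1 : (1:ℝ) ≤ 1 + γ * (a - y) := by nlinarith
      have h0 : (0:ℝ) < 1 + γ * (a - y) := by linarith
      rw [div_le_one h0]; exact h1
    · exact le_refl 1
  have hY0 : ∀ k ω, 0 ≤ Y k ω := by
    intro k ω; simp only [hY]; split_ifs with h
    · norm_num
    · exact hV0 _
  have hY1 : ∀ k ω, Y k ω ≤ 1 := by
    intro k ω; simp only [hY]; split_ifs with h
    · norm_num
    · exact hV1 _
  have hgnn : ∀ k ω, 0 ≤ g k ω := by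
    intro k ω; simp only [hg]; split_ifs with h
    · norm_num
    · positivity
  have hgbd : ∀ k ω, g k ω ≤ γ := by
    intro k ω; simp only [hg]; split_ifs with h
    · positivity
    · push_neg at h
      have hk : T k ω < a := h k le_rfl
      have h1 : (1:ℝ) ≤ (1 + γ * (a - T k ω)) ^ 2 := by
        nlinarith [mul_pos hγ (sub_pos.mpr hk), sq_nonneg (γ * (a - T k ω))]
      exact div_le_self hγ.le h1
  -- measurability
  have hAmeas : ∀ k, MeasurableSet[ℱ k] {ω | ∃ j ≤ k, a ≤ T j ω} := by
    intro k
    have : {ω | ∃ j ≤ k, a ≤ T j ω} = ⋃ j, ⋃ (_ : j ≤ k), {ω | a ≤ T j ω} := by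
      ext ω; simp
    rw [this]
    exact MeasurableSet.iUnion fun j => MeasurableSet.iUnion fun hj =>
      measurableSet_le measurable_const ((hTadapt j).mono (ℱ.mono hj) le_rfl)
  have hVmeas : Measurable V := by
    apply Measurable.ite (measurableSet_lt measurable_id measurable_const) _ measurable_const
    exact measurable_const.div (((measurable_const.sub measurable_id).const_mul γ).const_add 1)
  have hYmeas : ∀ k, Measurable[ℱ k] (Y k) := fun k =>
    Measurable.ite (hAmeas k) measurable_const (hVmeas.comp (hTadapt k))
  have hgmeas : ∀ k, Measurable[ℱ k] (g k) := by
    intro k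
    apply Measurable.ite (hAmeas k) measurable_const
    exact measurable_const.div
      ((((measurable_const.sub (hTadapt k)).const_mul γ).const_add 1).pow measurable_const)
  have hYint : ∀ k, Integrable (Y k) P := by
    intro k
    refine (integrable_const (1:ℝ)).mono'
      (((hYmeas k).mono (ℱ.le k) le_rfl).aestronglyMeasurable) ?_
    filter_upwards with ω
    rw [Real.norm_eq_abs, abs_le]
    exact ⟨by linarith [hY0 k ω], hY1 k ω⟩
  have hgD_int : ∀ k, Integrable (g k * D k) P := by
    intro k
    refine (hDint k).bdd_mul (((hgmeas k).mono (ℱ.le k) le_rfl).aestronglyMeasurable) (c := γ) (Filter.Eventually.of_forall fun ω => ?_)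
    rw [Real.norm_eq_abs, abs_of_nonneg (hgnn k ω)]
    exact hgbd k ω
  -- one-step inequality
  have hstep : ∀ k ω, Y (k+1) ω ≤ Y k ω + g k ω * D k ω := by
    intro k ω
    by_cases hA : ∃ j ≤ k, a ≤ T j ω
    · obtain ⟨j, hj, hja⟩ := hA
      have hA : ∃ j ≤ k, a ≤ T j ω := ⟨j, hj, hja⟩
      have hA' : ∃ j ≤ k+1, a ≤ T j ω := ⟨j, hj.trans (Nat.le_succ k), hja⟩
      simp only [hY, hg, if_pos hA, if_pos hA']
      norm_num
    · have hTk : T k ω < a := lt_of_not_ge fun hc => hA ⟨k, le_rfl, hc⟩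
      have hY1eq : Y (k+1) ω = V (T (k+1) ω) := by
        simp only [hY]
        split_ifs with hB
        · obtain ⟨j, hj, hja⟩ := hB
          have : j ≤ k ∨ j = k + 1 := by omega
          rcases this with h | rfl
          · exact absurd ⟨j, h, hja⟩ hA
          · simp only [hV]
            rw [if_neg (not_lt.mpr hja)]
        · rfl
      rw [hY1eq]
      have key := vfun_step γ a (T k ω) (T (k+1) ω) hγ hTk
      simp only [hY, hg, if_neg hA, hV, hD]
      exact key
  -- integral decreases
  have hint : ∀ k, ∫ ω, Y (k+1) ω ∂P ≤ ∫ ω, Y k ω ∂P := by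
    intro k
    have h1 : ∫ ω, Y (k+1) ω ∂P ≤ ∫ ω, (Y k + g k * D k) ω ∂P :=
      integral_mono (hYint (k+1)) ((hYint k).add (hgD_int k)) (fun ω => hstep k ω)
    simp only [Pi.add_apply] at h1
    rw [integral_add (hYint k) (hgD_int k)] at h1
    have h2 : ∫ ω, (g k * D k) ω ∂P ≤ 0 := by
      have hmul : P[g k * D k | ℱ k] =ᵐ[P] g k * P[D k | ℱ k] :=
        condExp_mul_of_stronglyMeasurable_left ((hgmeas k).stronglyMeasurable) (hgD_int k) (hDint k)
      calc ∫ ω, (g k * D k) ω ∂P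
          = ∫ ω, (P[g k * D k | ℱ k]) ω ∂P := (integral_condExp (ℱ.le k)).symm
        _ = ∫ ω, (g k * P[D k | ℱ k]) ω ∂P := integral_congr_ae hmul
        _ ≤ 0 := by
            refine integral_nonpos_of_ae ?_
            filter_upwards [hDle k] with ω hω
            have := hgnn k ω
            simp only [Pi.mul_apply]
            exact mul_nonpos_of_nonneg_of_nonpos this hω
    linarith
  -- base case
  have hbase : ∫ ω, Y 0 ω ∂P = 1 / (1 + γ * a) := by
    have hpt : ∀ ω, Y 0 ω = 1 / (1 + γ * a) := by
      intro ω
      simp only [hY]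
      rw [if_neg, hV]
      · simp only [hT0 ω]
        rw [if_pos ha, sub_zero]
      · rintro ⟨j, hj, hja⟩
        interval_cases j
        rw [hT0 ω] at hja
        linarith
    simp only [hpt]
    simp [integral_const]
  have hYn : ∀ m, ∫ ω, Y m ω ∂P ≤ 1 / (1 + γ * a) := by
    intro m
    induction m with
    | zero => rw [hbase]
    | succ m ih => exact (hint m).trans ih
  -- conclude
  have hAn : MeasurableSet {ω | ∃ k ≤ n, a ≤ T k ω} := (ℱ.le n) _ (hAmeas n)
  have hind : ∀ ω, Set.indicator {ω | ∃ k ≤ n, a ≤ T k ω} (1 : Ω → ℝ) ω ≤ Y n ω := by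
    intro ω
    by_cases h : ω ∈ {ω | ∃ k ≤ n, a ≤ T k ω}
    · rw [Set.indicator_of_mem h]
      simp only [hY]
      have h' : ∃ j ≤ n, a ≤ T j ω := h
      rw [if_pos h', Pi.one_apply]
    · rw [Set.indicator_of_notMem h]
      exact hY0 n ω
  have h3 : (P {ω | ∃ k ≤ n, a ≤ T k ω}).toReal ≤ ∫ ω, Y n ω ∂P := by
    rw [← measureReal_def, ← integral_indicator_one hAn]
    exact integral_mono ((integrable_const 1).indicator hAn) (hYint n) hind
  rw [← ENNReal.ofReal_toReal (measure_ne_top P _)]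
  exact ENNReal.ofReal_le_ofReal (h3.trans (hYn n))


theorem stmt_10 {Ω : Type*} {m0 : MeasurableSpace Ω} (P : Measure Ω) [IsProbabilityMeasure P]
    (ℱ : Filtration ℕ m0) (S : ℕ → Ω → ℝ) (hS0 : ∀ ω, S 0 ω = 0) (γ : ℝ) (hγ : 0 ≤ γ)
    (hsuper : Supermartingale
      (fun k ω => S k ω + γ * ∑ j ∈ Finset.Icc 1 k, (S j ω - S (j - 1) ω) ^ 2) ℱ P) :
    ∀ a : ℝ, 0 < a →
      P {ω | (a : EReal) ≤ ⨆ k, (S k ω : EReal)} ≤ ENNReal.ofReal (1 / (1 + γ * a)) := by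
  intro a ha
  rcases hγ.eq_or_lt with hγ0 | hγpos
  · rw [← hγ0]
    norm_num
    exact prob_le_one
  set M : ℕ → Ω → ℝ :=
    fun k ω => S k ω + γ * ∑ j ∈ Finset.Icc 1 k, (S j ω - S (j - 1) ω) ^ 2 with hM
  have hsuperM : Supermartingale M ℱ P := hsuper
  set T : ℕ → Ω → ℝ :=
    fun k ω => ∑ j ∈ Finset.Icc 1 k,
      ((-1) + Real.sqrt (1 + 4 * γ * (M j ω - M (j - 1) ω))) / (2 * γ) with hT
  have hMdiff : ∀ k ω, M (k+1) ω - M k ω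
      = (S (k+1) ω - S k ω) + γ * (S (k+1) ω - S k ω) ^ 2 := by
    intro k ω
    simp only [hM]
    rw [Finset.sum_Icc_succ_top (by omega : 1 ≤ k + 1)]
    simp only [Nat.add_sub_cancel]
    ring
  have hTdiff : ∀ k ω, T (k+1) ω - T k ω
      = ((-1) + Real.sqrt (1 + 4 * γ * (M (k+1) ω - M k ω))) / (2 * γ) := by
    intro k ω
    simp only [hT]
    rw [Finset.sum_Icc_succ_top (by omega : 1 ≤ k + 1)]
    simp only [Nat.add_sub_cancel]
    ring
  have hT0 : ∀ ω, T 0 ω = 0 := by intro ω; simp [hT]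
  have hTS : ∀ k ω, S k ω ≤ T k ω := by
    intro k ω
    induction k with
    | zero => rw [hS0, hT0]
    | succ k ih =>
      have h2 := hTdiff k ω
      rw [hMdiff k ω] at h2
      have hr := (root_facts γ (S (k+1) ω - S k ω) hγpos).1
      linarith
  have hTadapt : ∀ k, Measurable[ℱ k] (T k) := by
    intro k
    apply Finset.measurable_sum
    intro j hj
    have hjk : j ≤ k := (Finset.mem_Icc.mp hj).2
    have hMj : Measurable[ℱ k] (M j) :=
      ((hsuperM.stronglyAdapted j).measurable).mono (ℱ.mono hjk) le_rfl
    have hMj' : Measurable[ℱ k] (M (j-1)) :=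
      ((hsuperM.stronglyAdapted (j-1)).measurable).mono (ℱ.mono ((Nat.sub_le j 1).trans hjk)) le_rfl
    have hd : Measurable[ℱ k] fun ω => M j ω - M (j-1) ω := hMj.sub hMj'
    have hs : Measurable[ℱ k] fun ω => Real.sqrt (1 + 4 * γ * (M j ω - M (j-1) ω)) :=
      Real.continuous_sqrt.measurable.comp ((hd.const_mul (4 * γ)).const_add 1)
    exact (hs.const_add (-1)).div_const (2 * γ)
  have hDeq : ∀ k, (fun ω => (T (k+1) ω - T k ω) + γ * (T (k+1) ω - T k ω) ^ 2)
      = fun ω => M (k+1) ω - M k ω := by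
    intro k
    funext ω
    rw [hTdiff k ω, hMdiff k ω]
    exact (root_facts γ (S (k+1) ω - S k ω) hγpos).2
  have hDint : ∀ k, Integrable
      (fun ω => (T (k+1) ω - T k ω) + γ * (T (k+1) ω - T k ω) ^ 2) P := by
    intro k
    rw [hDeq k]
    exact (hsuperM.integrable (k+1)).sub (hsuperM.integrable k)
  have hDle : ∀ k,
      P[fun ω => (T (k+1) ω - T k ω) + γ * (T (k+1) ω - T k ω) ^ 2 | ℱ k] ≤ᵐ[P] 0 := by
    intro k
    rw [hDeq k]
    have h1 : P[fun ω => M (k+1) ω - M k ω | ℱ k]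
        =ᵐ[P] P[M (k+1) | ℱ k] - P[M k | ℱ k] :=
      condExp_sub (hsuperM.integrable (k+1)) (hsuperM.integrable k) _
    have h2 : P[M k | ℱ k] = M k :=
      condExp_of_stronglyMeasurable (ℱ.le k) (hsuperM.stronglyAdapted k) (hsuperM.integrable k)
    have h3 := hsuperM.condExp_ae_le (Nat.le_succ k)
    filter_upwards [h1, h3] with ω hω1 hω3
    have h2' : (P[M k | ℱ k]) ω = M k ω := congrFun h2 ω
    simp only [Pi.zero_apply]
    rw [hω1]
    simp only [Pi.sub_apply]
    rw [h2']
    linarith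
  have hbnd : ∀ b : ℝ, 0 < b → b < a →
      P {ω | (a : EReal) ≤ ⨆ k, (S k ω : EReal)} ≤ ENNReal.ofReal (1 / (1 + γ * b)) := by
    intro b hb hba
    have hsub : {ω | (a : EReal) ≤ ⨆ k, (S k ω : EReal)}
        ⊆ ⋃ n, {ω | ∃ k ≤ n, b ≤ T k ω} := by
      intro ω hω
      simp only [Set.mem_setOf_eq] at hω
      have hba' : (b : EReal) < ⨆ k, (S k ω : EReal) :=
        lt_of_lt_of_le (by exact_mod_cast hba) hω
      obtain ⟨k, hk⟩ := lt_iSup_iff.mp hba'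
      have hk' : b < S k ω := by exact_mod_cast hk
      exact Set.mem_iUnion.mpr ⟨k, k, le_rfl, hk'.le.trans (hTS k ω)⟩
    refine le_trans (measure_mono hsub) ?_
    have hmono : Monotone fun n => {ω | ∃ k ≤ n, b ≤ T k ω} := by
      rintro m n hmn ω ⟨k, hk, hbk⟩
      exact ⟨k, hk.trans hmn, hbk⟩
    rw [hmono.measure_iUnion]
    exact iSup_le fun n => horizon_bound P ℱ T hT0 hTadapt γ hγpos hDint hDle b hb n
  have h1 : Filter.Tendsto (fun m : ℕ => a / ((m : ℝ) + 2)) Filter.atTop (nhds 0) :=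
    Filter.Tendsto.div_atTop tendsto_const_nhds
      (Filter.tendsto_atTop_add_const_right _ 2 tendsto_natCast_atTop_atTop)
  have h3 : Filter.Tendsto (fun m : ℕ => 1 + γ * (a - a / ((m : ℝ) + 2)))
      Filter.atTop (nhds (1 + γ * (a - 0))) :=
    (((tendsto_const_nhds (x := a)).sub h1).const_mul γ).const_add 1
  rw [sub_zero] at h3
  have h2 : Filter.Tendsto (fun m : ℕ => 1 / (1 + γ * (a - a / ((m : ℝ) + 2))))
      Filter.atTop (nhds (1 / (1 + γ * a))) :=
    tendsto_const_nhds.div h3 (ne_of_gt (by positivity))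
  have htend : Filter.Tendsto
      (fun m : ℕ => ENNReal.ofReal (1 / (1 + γ * (a - a / ((m : ℝ) + 2)))))
      Filter.atTop (nhds (ENNReal.ofReal (1 / (1 + γ * a)))) :=
    (ENNReal.continuous_ofReal.tendsto _).comp h2
  refine ge_of_tendsto' htend fun m => ?_
  have hm2 : (1:ℝ) < (m : ℝ) + 2 := by
    have := Nat.cast_nonneg (α := ℝ) m
    linarith
  have hfrac : a / ((m : ℝ) + 2) < a := div_lt_self ha hm2
  have hfracpos : 0 < a / ((m : ℝ) + 2) := by positivity
  exact hbnd (a - a / ((m : ℝ) + 2)) (by linarith) (by linarith)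
end
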